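/- Let θ(x) = Σ_{i=0}^n λᵢ x^{n−i} ∈ k[x] be a monic polynomial of degree n ≥ 1 which is a power of an irreducible polynomial and which is neither xⁿ nor (x+1)ⁿ. Then there exists a surjective kG-module homomorphism π : (kG)ⁿ → V_{2n,θ} which splits on restriction to each of the subgroups H₁, H₂, H₃, and whose kernel is isomorphic as a kG-module to V_{2n,θ}. -/

import Mathlib

/-- The Klein four-group `G = C₂ × C₂`. -/
abbrev K4 : Type := Multiplicative (ZMod 2 × ZMod 2)

/-- The generator `σ` of the Klein four-group. -/
def sg : K4 := Multiplicative.ofAdd ((1 : ZMod 2), (0 : ZMod 2))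

/-- The generator `τ` of the Klein four-group. -/
def tg : K4 := Multiplicative.ofAdd ((0 : ZMod 2), (1 : ZMod 2))

/-- The subgroup `H₁ = ⟨σ⟩`. -/
def H1 : Subgroup K4 := Subgroup.zpowers sg

/-- The subgroup `H₂ = ⟨τ⟩`. -/
def H2 : Subgroup K4 := Subgroup.zpowers tg

/-- The subgroup `H₃ = ⟨στ⟩`. -/
def H3 : Subgroup K4 := Subgroup.zpowers (sg * tg)

/-- `V` carries the structure of the module `V_{2n,θ}` for a monic polynomial
`θ(x) = Σ_{i=0}^n λᵢ x^{n-i}` of degree `n ≥ 1`: the basis vector `B (Sum.inl i)` is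
`a_{i+1}` and `B (Sum.inr i)` is `b_{i+1}` (for `0 ≤ i ≤ n-1`), with `Y·aᵢ = bᵢ` for all
`i`, `X·aᵢ = b_{i-1}` for `2 ≤ i ≤ n`, `X·a₁ = Σ_{i=1}^n λᵢ bᵢ` (where `λᵢ = θ.coeff (n-i)`),
and `X·bⱼ = Y·bⱼ = 0`. -/
def IsVtheta (k : Type) [Field k] (n : ℕ) (hn : 0 < n) (θ : Polynomial k) (V : Type)
    [AddCommGroup V] [Module k V] [DistribMulAction K4 V]
    (B : Module.Basis (Fin n ⊕ Fin n) k V) : Prop :=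
  (∀ i : Fin n, tg • B (Sum.inl i) = B (Sum.inl i) + B (Sum.inr i)) ∧
  (∀ i j : Fin n, (j : ℕ) + 1 = (i : ℕ) →
    sg • B (Sum.inl i) = B (Sum.inl i) + B (Sum.inr j)) ∧
  (sg • B (Sum.inl ⟨0, hn⟩) = B (Sum.inl ⟨0, hn⟩) +
    ∑ j : Fin n, θ.coeff (n - 1 - (j : ℕ)) • B (Sum.inr j)) ∧
  (∀ j : Fin n, sg • B (Sum.inr j) = B (Sum.inr j)) ∧
  (∀ j : Fin n, tg • B (Sum.inr j) = B (Sum.inr j))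

/-! ### Auxiliary lemmas -/

lemma K4_univ' : (Finset.univ : Finset K4) = {1, sg, tg, sg * tg} := by decide

lemma K4_inv' (g : K4) : g⁻¹ = g := by revert g; decide

lemma K4_sq' (g : K4) : g * g = 1 := by revert g; decide

lemma K4_cases' (g : K4) : g = 1 ∨ g = sg ∨ g = tg ∨ g = sg * tg := by revert g; decide

lemma mem_zpowers_cases' {g h : K4} (hh : h ∈ Subgroup.zpowers g) : h = 1 ∨ h = g := by
  obtain ⟨z, rfl⟩ := hh
  rcases Int.even_or_odd z with ⟨m, rfl⟩ | ⟨m, rfl⟩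
  · left; show g ^ (m + m) = 1
    rw [← two_mul, zpow_mul, zpow_two, K4_sq' g, one_zpow]
  · right; show g ^ (2 * m + 1) = g
    rw [zpow_add, zpow_mul, zpow_two, K4_sq' g, one_zpow, one_mul, zpow_one]

open Polynomial in
lemma theta_root_pow {k : Type} [Field k] {θ : Polynomial k} {n : ℕ}
    (hmonic : θ.Monic) (hdeg : θ.natDegree = n)
    (hpow : ∃ (p : Polynomial k) (e : ℕ), Irreducible p ∧ θ = p ^ e)
    (r : k) (hroot : θ.eval r = 0) : θ = (X - C r) ^ n := by
  obtain ⟨p, e, hp, rfl⟩ := hpow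
  have hprime : Prime (X - C r) := prime_X_sub_C r
  have hdvd : (X - C r) ∣ p ^ e := dvd_iff_isRoot.mpr hroot
  have hdvdp : (X - C r) ∣ p := hprime.dvd_of_dvd_pow hdvd
  obtain ⟨u, hu⟩ := hdvdp
  have huu : IsUnit u := by
    rcases hp.isUnit_or_isUnit hu with h | h
    · exact absurd h hprime.not_unit
    · exact h
  have hassoc : Associated (X - C r) p := ⟨huu.unit, by rw [hu]; rfl⟩
  have hassoc2 : Associated ((X - C r) ^ e) (p ^ e) := hassoc.pow_pow ..
  have heq : (X - C r) ^ e = p ^ e :=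
    Polynomial.eq_of_monic_of_associated ((monic_X_sub_C r).pow e) hmonic hassoc2
  have hdeg2 : e = n := by
    have h := hdeg
    rw [← heq, natDegree_pow, natDegree_X_sub_C, mul_one] at h
    exact h
  rw [← heq, hdeg2]

section MatrixAux

variable {k : Type} [Field k] {n : ℕ}

/-- companion-type matrix: column 0 is `c`, column `m ≥ 1` has a 1 in row `m-1`. -/
def Mmat (c : Fin n → k) : Matrix (Fin n) (Fin n) k :=
  fun j m => if (m : ℕ) = 0 then c j else if (j : ℕ) + 1 = (m : ℕ) then 1 else 0

def Tsum (v : Fin n → k) (j : Fin n) : k :=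
  ∑ i : Fin n, if (j : ℕ) + 1 = (i : ℕ) then v i else 0

lemma Tsum_eq (v : Fin n → k) (j : Fin n) :
    Tsum v j = if h : (j : ℕ) + 1 < n then v ⟨(j : ℕ) + 1, h⟩ else 0 := by
  unfold Tsum
  split
  · rename_i h
    rw [Finset.sum_eq_single (⟨(j : ℕ) + 1, h⟩ : Fin n)]
    · simp
    · intro i _ hi
      rw [if_neg]
      intro hc
      exact hi (Fin.ext hc.symm)
    · simp
  · rename_i h
    apply Finset.sum_eq_zero
    intro i _
    rw [if_neg]
    intro hc
    exact h (hc ▸ i.isLt)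

lemma Mmat_mulVec (hn : 0 < n) (c : Fin n → k) (v : Fin n → k) (j : Fin n) :
    (Mmat c).mulVec v j = c j * v ⟨0, hn⟩ + Tsum v j := by
  have hsplit : ∀ i : Fin n, Mmat c j i * v i =
      (if i = (⟨0, hn⟩ : Fin n) then c j * v i else 0)
        + (if (j : ℕ) + 1 = (i : ℕ) then v i else 0) := by
    intro i
    unfold Mmat
    by_cases hi : (i : ℕ) = 0
    · rw [if_pos hi, if_pos (Fin.ext hi), if_neg (by omega), add_zero]
    · rw [if_neg hi, if_neg (fun hc : i = ⟨0, hn⟩ => hi (by rw [hc])), zero_add]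
      split <;> simp
  show (∑ i : Fin n, Mmat c j i * v i) = _
  rw [Finset.sum_congr rfl (fun i _ => hsplit i), Finset.sum_add_distrib,
    Finset.sum_ite_eq' Finset.univ (⟨0, hn⟩ : Fin n) (fun i => c j * v i)]
  simp [Tsum]

lemma Mmat_det_ne (hn : 0 < n) (c : Fin n → k) (hc : c ⟨n - 1, by omega⟩ ≠ 0) :
    (Mmat c).det ≠ 0 := by
  intro hdet
  obtain ⟨v, hv0, hmv⟩ := Matrix.exists_mulVec_eq_zero_iff.mpr hdet
  have hrow : ∀ j, c j * v ⟨0, hn⟩ + Tsum v j = 0 := by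
    intro j; rw [← Mmat_mulVec hn c v j, hmv]; rfl
  have h0 : v ⟨0, hn⟩ = 0 := by
    have h := hrow ⟨n - 1, by omega⟩
    rw [Tsum_eq, dif_neg (by simp; omega), add_zero] at h
    exact (mul_eq_zero.mp h).resolve_left hc
  apply hv0
  funext i
  show v i = 0
  by_cases hi : (i : ℕ) = 0
  · rw [(Fin.ext hi : i = ⟨0, hn⟩), h0]
  · have hlt : (i : ℕ) - 1 < n := by omega
    have h := hrow ⟨(i : ℕ) - 1, hlt⟩
    rw [h0, mul_zero, zero_add, Tsum_eq, dif_pos (by simp; omega)] at h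
    rw [show i = ⟨(⟨(i : ℕ) - 1, hlt⟩ : Fin n).val + 1, by simp; omega⟩ by
      apply Fin.ext; simp; omega]
    exact h

lemma Mmat_add_one_det_ne [CharP k 2] (hn : 0 < n) (c : Fin n → k)
    (hc : 1 + ∑ j, c j ≠ 0) : (Mmat c + 1).det ≠ 0 := by
  intro hdet
  have htwo : (2 : k) = 0 := by
    have h := CharP.cast_eq_zero k 2; exact_mod_cast h
  obtain ⟨v, hv0, hmv⟩ := Matrix.exists_mulVec_eq_zero_iff.mpr hdet
  have hrow : ∀ j, c j * v ⟨0, hn⟩ + Tsum v j + v j = 0 := by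
    intro j
    have h : (Mmat c + 1).mulVec v j = 0 := by rw [hmv]; rfl
    rw [Matrix.add_mulVec, Matrix.one_mulVec] at h
    rw [← h, Pi.add_apply, Mmat_mulVec hn c v j]
  have hTsum : ∀ i : Fin n, (∑ j : Fin n, if (j : ℕ) + 1 = (i : ℕ) then v i else 0)
      = v i - (if i = (⟨0, hn⟩ : Fin n) then v i else 0) := by
    intro i
    by_cases hi : (i : ℕ) = 0
    · rw [if_pos (Fin.ext hi), sub_self]
      apply Finset.sum_eq_zero
      intro j _
      rw [if_neg (by omega)]
    · rw [if_neg (fun hcc : i = ⟨0, hn⟩ => hi (by rw [hcc])), sub_zero]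
      have hlt : (i : ℕ) - 1 < n := by omega
      rw [Finset.sum_eq_single (⟨(i : ℕ) - 1, hlt⟩ : Fin n)]
      · rw [if_pos (by simp; omega)]
      · intro j _ hj
        rw [if_neg (fun hcc => hj (Fin.ext (by simp; omega)))]
      · simp
  have hsum : (∑ j, c j) * v ⟨0, hn⟩ + ((∑ i, v i) - v ⟨0, hn⟩) + (∑ j, v j) = 0 := by
    have h := Finset.sum_congr rfl (fun j (_ : j ∈ Finset.univ) => (hrow j).symm)
    rw [Finset.sum_const_zero] at h
    rw [Finset.sum_add_distrib, Finset.sum_add_distrib] at h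
    rw [← Finset.sum_mul] at h
    rw [show (∑ j, Tsum v j) = (∑ i, v i) - v ⟨0, hn⟩ from ?_] at h
    · exact h.symm
    · unfold Tsum
      rw [Finset.sum_comm]
      rw [Finset.sum_congr rfl (fun i _ => hTsum i), Finset.sum_sub_distrib,
        Finset.sum_ite_eq' Finset.univ (⟨0, hn⟩ : Fin n) (fun i => v i)]
      simp
  have h0 : v ⟨0, hn⟩ = 0 := by
    have hkey : (1 + ∑ j, c j) * v ⟨0, hn⟩ = 0 := by
      linear_combination hsum + (v ⟨0, hn⟩ - ∑ i, v i) * htwo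
    exact (mul_eq_zero.mp hkey).resolve_left hc
  apply hv0
  have hall : ∀ m : ℕ, ∀ hm : m < n, v ⟨m, hm⟩ = 0 := by
    intro m
    induction m with
    | zero => intro hm; exact h0
    | succ p ih =>
      intro hm
      have hp : p < n := by omega
      have h := hrow ⟨p, hp⟩
      rw [h0, mul_zero, zero_add, Tsum_eq, dif_pos (by simp; omega), ih hp, add_zero] at h
      rw [show (⟨p + 1, hm⟩ : Fin n) = ⟨(⟨p, hp⟩ : Fin n).val + 1, by simp; omega⟩ from
        Fin.ext (by simp)]
      exact h
  funext i
  exact hall i.val i.isLt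

end MatrixAux

section LinAux

set_option linter.unusedSectionVars false

variable {k : Type} [Field k] {n : ℕ} {V : Type} [AddCommGroup V] [Module k V]
  [DistribMulAction K4 V] [SMulCommClass K4 k V]

/-- The `kG`-map `(kG)ⁿ → V` sending `e_i ↦ a_i`. -/
noncomputable def piMap (B : Module.Basis (Fin n ⊕ Fin n) k V) : (Fin n → K4 → k) →ₗ[k] V where
  toFun F := ∑ i : Fin n, ∑ g : K4, F i g • g • B (Sum.inl i)
  map_add' F G := by simp [add_smul, Finset.sum_add_distrib]
  map_smul' c F := by simp [Finset.smul_sum, smul_smul]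

/-- `eG i g₀` is `g₀ • e_i` in `(kG)ⁿ`. -/
def eG (i : Fin n) (g0 : K4) : Fin n → K4 → k :=
  fun i' x => if i' = i then (if x = g0 then 1 else 0) else 0

lemma piMap_eG (B : Module.Basis (Fin n ⊕ Fin n) k V) (i : Fin n) (g0 : K4) :
    piMap B (eG i g0) = g0 • B (Sum.inl i) := by
  simp only [piMap, eG, LinearMap.coe_mk, AddHom.coe_mk]
  rw [Finset.sum_eq_single i]
  · rw [Finset.sum_eq_single g0] <;> simp +contextual
  · intro b _ hb; simp [hb]
  · simp

lemma piMap_equivariant (B : Module.Basis (Fin n ⊕ Fin n) k V) (g : K4) (F : Fin n → K4 → k) :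
    piMap B (fun i x => F i (g⁻¹ * x)) = g • piMap B F := by
  simp only [piMap, LinearMap.coe_mk, AddHom.coe_mk]
  rw [Finset.smul_sum]
  refine Finset.sum_congr rfl fun i _ => ?_
  rw [Finset.smul_sum]
  refine Fintype.sum_equiv (Equiv.mulLeft g⁻¹) _ _ fun y => ?_
  simp only [Equiv.coe_mulLeft]
  rw [smul_comm g (F i (g⁻¹ * y)), ← mul_smul, mul_inv_cancel_left]

/-- The equivariant map `V → (kG)ⁿ` given by coordinates of the orbit. -/
noncomputable def iotaMap (B : Module.Basis (Fin n ⊕ Fin n) k V) : V →ₗ[k] (Fin n → K4 → k) where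
  toFun v := fun i x => B.coord (Sum.inr i) (x • v)
  map_add' u v := by funext i x; simp [smul_add]
  map_smul' c v := by funext i x; simp [smul_comm x c v]

/-- Translation by `g` on `(kG)ⁿ`, as a `k`-linear map. -/
def trMap (g : K4) : (Fin n → K4 → k) →ₗ[k] (Fin n → K4 → k) where
  toFun F := fun i x => F i (g⁻¹ * x)
  map_add' _ _ := rfl
  map_smul' _ _ := rfl

lemma trMap_eG (g : K4) (i : Fin n) (g0 : K4) :
    trMap g (eG i g0 : Fin n → K4 → k) = eG i (g * g0) := by
  funext i' x
  show (eG i g0 : Fin n → K4 → k) i' (g⁻¹ * x) = (eG i (g * g0) : Fin n → K4 → k) i' x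
  simp only [eG]
  by_cases h1 : i' = i <;> simp [h1, inv_mul_eq_iff_eq_mul]

end LinAux

set_option maxHeartbeats 1000000 in
/-- Let `θ` be a monic polynomial of degree `n ≥ 1` which is a power of an irreducible
polynomial and is neither `xⁿ` nor `(x+1)ⁿ`. Then there is a surjective `kG`-homomorphism
`π : (kG)ⁿ → V_{2n,θ}` which splits on restriction to each of `H₁, H₂, H₃` and whose
kernel is isomorphic as a `kG`-module to `V_{2n,θ}` itself (realized via an injective
equivariant map `ι : V → (kG)ⁿ` with range `ker π`). The free module `(kG)ⁿ` is realized
as `Fin n → (K4 → k)` with the left regular action `(g • F) i x = F i (g⁻¹x)`. -/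
theorem stmt10 (k : Type) [Field k] [CharP k 2] (n : ℕ) (hn : 0 < n)
    (θ : Polynomial k) (hmonic : θ.Monic) (hdeg : θ.natDegree = n)
    (hpow : ∃ (p : Polynomial k) (e : ℕ), Irreducible p ∧ θ = p ^ e)
    (hne1 : θ ≠ Polynomial.X ^ n) (hne2 : θ ≠ (Polynomial.X + 1) ^ n)
    (V : Type) [AddCommGroup V] [Module k V] [DistribMulAction K4 V] [SMulCommClass K4 k V]
    (B : Module.Basis (Fin n ⊕ Fin n) k V) (hV : IsVtheta k n hn θ V B) :
    ∃ π : (Fin n → K4 → k) →ₗ[k] V,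
      Function.Surjective π ∧
      (∀ (g : K4) (F : Fin n → K4 → k),
        π (fun i x => F i (g⁻¹ * x)) = g • π F) ∧
      (∀ H ∈ ({H1, H2, H3} : Set (Subgroup K4)),
        ∃ s : V →ₗ[k] (Fin n → K4 → k),
          (∀ v : V, π (s v) = v) ∧
          (∀ h ∈ H, ∀ v : V, s (h • v) = fun i x => s v i (h⁻¹ * x))) ∧
      ∃ ι : V →ₗ[k] (Fin n → K4 → k),
        Function.Injective ι ∧
        (∀ (g : K4) (v : V), ι (g • v) = fun i x => ι v i (g⁻¹ * x)) ∧
        LinearMap.range ι = LinearMap.ker π := by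
  classical
  obtain ⟨hτa, hσa', hσa0, hσb, hτb⟩ := hV
  have htwo : (2 : k) = 0 := by
    have h := CharP.cast_eq_zero k 2
    exact_mod_cast h
  have hkk : ∀ x : k, x + x = 0 := fun x => by
    have h : x + x = (2 : k) * x := by ring
    rw [h, htwo, zero_mul]
  have hvv : ∀ v : V, v + v = 0 := fun v => by
    rw [← two_smul k v, htwo, zero_smul]
  -- the matrix of the action of X = σ - 1
  have hσa : ∀ m : Fin n, sg • B (Sum.inl m) = B (Sum.inl m)
      + ∑ j, Mmat (fun j' : Fin n => θ.coeff (n - 1 - (j' : ℕ))) j m • B (Sum.inr j) := by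
    intro m
    by_cases hm : (m : ℕ) = 0
    · rw [(Fin.ext hm : m = ⟨0, hn⟩), hσa0]
      congr 1
    · have hlt : (m : ℕ) - 1 < n := by omega
      rw [hσa' m ⟨(m : ℕ) - 1, hlt⟩ (by simp; omega)]
      congr 1
      symm
      rw [Finset.sum_eq_single (⟨(m : ℕ) - 1, hlt⟩ : Fin n)]
      · rw [show Mmat (fun j' : Fin n => θ.coeff (n - 1 - (j' : ℕ))) ⟨(m : ℕ) - 1, hlt⟩ m = 1 from ?_,
          one_smul]
        unfold Mmat
        rw [if_neg hm, if_pos (by simp; omega)]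
      · intro j _ hj
        rw [show Mmat (fun j' : Fin n => θ.coeff (n - 1 - (j' : ℕ))) j m = 0 from ?_, zero_smul]
        unfold Mmat
        rw [if_neg hm, if_neg (fun hcc => hj (Fin.ext (by simp; omega)))]
      · simp
  have hcollapse1 : ∀ m : Fin n,
      (∑ j, (1 : Matrix (Fin n) (Fin n) k) j m • B (Sum.inr j)) = B (Sum.inr m) := by
    intro m
    rw [Finset.sum_eq_single m]
    · rw [Matrix.one_apply_eq, one_smul]
    · intro j _ hj; rw [Matrix.one_apply_ne hj, zero_smul]
    · simp
  have hτa1 : ∀ m : Fin n, tg • B (Sum.inl m) = B (Sum.inl m)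
      + ∑ j, (1 : Matrix (Fin n) (Fin n) k) j m • B (Sum.inr j) := by
    intro m
    rw [hτa m, hcollapse1 m]
  have hsta : ∀ m : Fin n, (sg * tg) • B (Sum.inl m)
      = sg • B (Sum.inl m) + B (Sum.inr m) := by
    intro m
    rw [mul_smul, hτa m, smul_add, hσb m]
  have hsta1 : ∀ m : Fin n, (sg * tg) • B (Sum.inl m) = B (Sum.inl m)
      + ∑ j, (Mmat (fun j' : Fin n => θ.coeff (n - 1 - (j' : ℕ))) + 1) j m • B (Sum.inr j) := by
    intro m
    rw [hsta m, hσa m]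
    have h : ∀ j : Fin n, (Mmat (fun j' : Fin n => θ.coeff (n - 1 - (j' : ℕ))) + 1) j m • B (Sum.inr j)
        = Mmat (fun j' : Fin n => θ.coeff (n - 1 - (j' : ℕ))) j m • B (Sum.inr j)
          + (1 : Matrix (Fin n) (Fin n) k) j m • B (Sum.inr j) := by
      intro j; rw [Matrix.add_apply, add_smul]
    rw [Finset.sum_congr rfl fun j _ => h j, Finset.sum_add_distrib, hcollapse1 m, add_assoc]
  have hstb : ∀ j : Fin n, (sg * tg) • B (Sum.inr j) = B (Sum.inr j) := by
    intro j; rw [mul_smul, hτb j, hσb j]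
  have hxb : ∀ (x : K4) (m : Fin n), x • B (Sum.inr m) = B (Sum.inr m) := by
    intro x m
    rcases K4_cases' x with rfl | rfl | rfl | rfl
    · rw [one_smul]
    · exact hσb m
    · exact hτb m
    · exact hstb m
  -- theta evaluations
  have hθ0 : θ.coeff 0 ≠ 0 := by
    intro h
    apply hne1
    have h2 := theta_root_pow hmonic hdeg hpow 0 (by rwa [← Polynomial.coeff_zero_eq_eval_zero])
    rwa [map_zero, sub_zero] at h2
  have hθ1 : (1 : k) + ∑ j : Fin n, θ.coeff (n - 1 - (j : ℕ)) ≠ 0 := by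
    have hsum : (∑ j : Fin n, θ.coeff (n - 1 - (j : ℕ)))
        = ∑ j ∈ Finset.range n, θ.coeff j := by
      rw [Fin.sum_univ_eq_sum_range (fun j => θ.coeff (n - 1 - j)) n]
      exact Finset.sum_range_reflect (fun j => θ.coeff j) n
    have hcn : θ.coeff n = 1 := by
      have h := hmonic.coeff_natDegree
      rwa [hdeg] at h
    have heval : θ.eval 1 = (1 : k) + ∑ j : Fin n, θ.coeff (n - 1 - (j : ℕ)) := by
      rw [Polynomial.eval_eq_sum_range, hdeg, Finset.sum_range_succ, hcn]
      simp only [one_pow, mul_one]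
      rw [← hsum, add_comm]
    rw [← heval]
    intro h
    apply hne2
    have h2 := theta_root_pow hmonic hdeg hpow 1 h
    rw [map_one] at h2
    rwa [show (Polynomial.X - 1 : Polynomial k) = Polynomial.X + 1 from ?_] at h2
    rw [sub_eq_add_neg]
    congr 1
    rw [neg_eq_iff_add_eq_zero, ← Polynomial.C_1, ← map_add, hkk 1, map_zero]
  -- determinants
  have hdet1 : (Mmat (fun j' : Fin n => θ.coeff (n - 1 - (j' : ℕ)))).det ≠ 0 := by
    apply Mmat_det_ne hn
    show θ.coeff (n - 1 - ((⟨n - 1, by omega⟩ : Fin n) : ℕ)) ≠ 0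
    rw [show n - 1 - ((⟨n - 1, by omega⟩ : Fin n) : ℕ) = 0 by simp]
    exact hθ0
  have hdet3 : (Mmat (fun j' : Fin n => θ.coeff (n - 1 - (j' : ℕ))) + 1).det ≠ 0 :=
    Mmat_add_one_det_ne hn _ hθ1
  -- generic splitting construction
  have key : ∀ (g : K4) (M : Matrix (Fin n) (Fin n) k), M.det ≠ 0 →
      (∀ m, g • B (Sum.inl m) = B (Sum.inl m) + ∑ j, M j m • B (Sum.inr j)) →
      (∀ j, g • B (Sum.inr j) = B (Sum.inr j)) →
      ∃ s : V →ₗ[k] (Fin n → K4 → k),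
        (∀ v : V, piMap B (s v) = v) ∧
        (∀ h ∈ Subgroup.zpowers g, ∀ v : V, s (h • v) = fun i x => s v i (h⁻¹ * x)) := by
    intro g M hdet hga hgb
    have hMunit : IsUnit M.det := isUnit_iff_ne_zero.mpr hdet
    have hMN : M * M⁻¹ = 1 := Matrix.mul_nonsing_inv M hMunit
    have hNM : M⁻¹ * M = 1 := Matrix.nonsing_inv_mul M hMunit
    set f : (Fin n ⊕ Fin n) → (Fin n → K4 → k) :=
      Sum.elim (fun m => eG m 1) (fun jj => ∑ i, M⁻¹ i jj • (eG i g + eG i 1)) with hf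
    set s : V →ₗ[k] (Fin n → K4 → k) := B.constr ℕ f with hs
    have hsl : ∀ m, s (B (Sum.inl m)) = eG m 1 :=
      fun m => B.constr_basis ℕ f (Sum.inl m)
    have hsr : ∀ jj, s (B (Sum.inr jj)) = ∑ i, M⁻¹ i jj • ((eG i g : Fin n → K4 → k) + eG i 1) :=
      fun jj => B.constr_basis ℕ f (Sum.inr jj)
    have hcol : ∀ (m : Fin n) (X : Fin n → (Fin n → K4 → k)),
        (∑ i, (1 : Matrix (Fin n) (Fin n) k) i m • X i) = X m := by
      intro m X
      rw [Finset.sum_eq_single m]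
      · rw [Matrix.one_apply_eq, one_smul]
      · intro j _ hj; rw [Matrix.one_apply_ne hj, zero_smul]
      · simp
    have hπs : ∀ v : V, piMap B (s v) = v := by
      have hcomp : (piMap B).comp s = LinearMap.id := by
        apply B.ext
        rintro (m | jj)
        · rw [LinearMap.comp_apply, LinearMap.id_apply, hsl, piMap_eG, one_smul]
        · rw [LinearMap.comp_apply, LinearMap.id_apply, hsr, map_sum]
          have h1 : ∀ i, piMap B (M⁻¹ i jj • ((eG i g : Fin n → K4 → k) + eG i 1))
              = ∑ l, (M l i * M⁻¹ i jj) • B (Sum.inr l) := by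
            intro i
            rw [map_smul, map_add, piMap_eG, piMap_eG, one_smul, hga i,
              add_comm (B (Sum.inl i)), add_assoc, hvv, add_zero, Finset.smul_sum]
            refine Finset.sum_congr rfl fun l _ => ?_
            rw [smul_smul, mul_comm (M⁻¹ i jj) (M l i)]
          rw [Finset.sum_congr rfl fun i _ => h1 i, Finset.sum_comm]
          have h2 : ∀ l, (∑ i, (M l i * M⁻¹ i jj) • B (Sum.inr l))
              = (1 : Matrix (Fin n) (Fin n) k) l jj • B (Sum.inr l) := by
            intro l
            rw [← Finset.sum_smul, ← Matrix.mul_apply, hMN]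
          rw [Finset.sum_congr rfl fun l _ => h2 l, hcollapse1 jj]
      intro v
      exact LinearMap.congr_fun hcomp v
    refine ⟨s, hπs, ?_⟩
    intro h hh v
    rcases mem_zpowers_cases' hh with rfl | rfl
    · funext i x
      rw [one_smul, inv_one, one_mul]
    · have hlin : s.comp (DistribMulAction.toLinearMap k V h) = (trMap h).comp s := by
        apply B.ext
        rintro (m | jj)
        · rw [LinearMap.comp_apply, LinearMap.comp_apply]
          show s (h • B (Sum.inl m)) = trMap h (s (B (Sum.inl m)))
          rw [hsl, trMap_eG, mul_one, hga m, map_add, hsl, map_sum]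
          have h1 : ∀ j, s (M j m • B (Sum.inr j))
              = ∑ i, (M⁻¹ i j * M j m) • ((eG i h : Fin n → K4 → k) + eG i 1) := by
            intro j
            rw [map_smul, hsr, Finset.smul_sum]
            refine Finset.sum_congr rfl fun i _ => ?_
            rw [smul_smul, mul_comm (M j m) (M⁻¹ i j)]
          rw [Finset.sum_congr rfl fun j _ => h1 j, Finset.sum_comm]
          have h2 : ∀ i, (∑ j, (M⁻¹ i j * M j m) • ((eG i h : Fin n → K4 → k) + eG i 1))
              = (1 : Matrix (Fin n) (Fin n) k) i m • ((eG i h : Fin n → K4 → k) + eG i 1) := by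
            intro i
            rw [← Finset.sum_smul, ← Matrix.mul_apply, hNM]
          rw [Finset.sum_congr rfl fun i _ => h2 i, hcol m]
          funext i x
          show (eG m 1 : Fin n → K4 → k) i x
              + ((eG m h : Fin n → K4 → k) i x + (eG m 1 : Fin n → K4 → k) i x)
              = (eG m h : Fin n → K4 → k) i x
          rw [add_left_comm, hkk, add_zero]
        · rw [LinearMap.comp_apply, LinearMap.comp_apply]
          show s (h • B (Sum.inr jj)) = trMap h (s (B (Sum.inr jj)))
          rw [hgb jj, hsr, map_sum]
          refine Finset.sum_congr rfl fun i _ => ?_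
          rw [map_smul, map_add, trMap_eG, trMap_eG, K4_sq', mul_one]
          congr 1
          exact add_comm _ _
      exact LinearMap.congr_fun hlin v
  -- surjectivity
  have hsurj : Function.Surjective (piMap B) := by
    have hmem : ∀ j : Fin n ⊕ Fin n, B j ∈ LinearMap.range (piMap B) := by
      rintro (m | m)
      · exact ⟨eG m 1, by rw [piMap_eG, one_smul]⟩
      · refine ⟨(eG m tg : Fin n → K4 → k) + eG m 1, ?_⟩
        rw [map_add, piMap_eG, piMap_eG, one_smul, hτa m,
          add_comm (B (Sum.inl m)) (B (Sum.inr m)), add_assoc, hvv, add_zero]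
    rw [← LinearMap.range_eq_top, eq_top_iff, ← B.span_eq, Submodule.span_le]
    rintro v ⟨j, rfl⟩
    exact hmem j
  refine ⟨piMap B, hsurj, piMap_equivariant B, ?_, ?_⟩
  · intro H hH
    simp only [Set.mem_insert_iff, Set.mem_singleton_iff] at hH
    rcases hH with rfl | rfl | rfl
    · exact key sg (Mmat (fun j' : Fin n => θ.coeff (n - 1 - (j' : ℕ)))) hdet1 hσa hσb
    · exact key tg 1 (by simp) hτa1 hτb
    · exact key (sg * tg) (Mmat (fun j' : Fin n => θ.coeff (n - 1 - (j' : ℕ))) + 1)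
        hdet3 hsta1 hstb
  -- the kernel
  · have hsum4 : ∀ f : K4 → V, (∑ x : K4, f x) = f 1 + (f sg + (f tg + f (sg * tg))) := by
      intro f
      rw [show (Finset.univ : Finset K4) = {1, sg, tg, sg * tg} from K4_univ']
      rw [Finset.sum_insert (by decide), Finset.sum_insert (by decide),
        Finset.sum_insert (by decide), Finset.sum_singleton]
    have hco1 : ∀ i m : Fin n, B.coord (Sum.inr i) (B (Sum.inl m)) = 0 := by
      intro i m
      rw [Module.Basis.coord_apply, Module.Basis.repr_self_apply, if_neg (by simp)]
    have hco2 : ∀ i m : Fin n, B.coord (Sum.inr i) (B (Sum.inr m)) = if m = i then (1 : k) else 0 := by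
      intro i m
      rw [Module.Basis.coord_apply, Module.Basis.repr_self_apply]
      by_cases h : m = i <;> simp [h]
    have hcoS : ∀ (i : Fin n) (w : Fin n → k),
        B.coord (Sum.inr i) (∑ mm, w mm • B (Sum.inr mm)) = w i := by
      intro i w
      rw [map_sum]
      have h : ∀ mm : Fin n, B.coord (Sum.inr i) (w mm • B (Sum.inr mm))
          = if mm = i then w mm else 0 := by
        intro mm
        rw [map_smul, hco2, smul_eq_mul, mul_ite, mul_one, mul_zero]
      rw [Finset.sum_congr rfl fun mm _ => h mm,
        Finset.sum_ite_eq' Finset.univ i w, if_pos (Finset.mem_univ i)]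
    have hcolgen : ∀ (m : Fin n) (X : Fin n → V),
        (∑ i, (if m = i then (1 : k) else 0) • X i) = X m := by
      intro m X
      rw [Finset.sum_eq_single m]
      · rw [if_pos rfl, one_smul]
      · intro j _ hj; rw [if_neg (fun h => hj h.symm), zero_smul]
      · simp
    have hcoaσ : ∀ i m : Fin n, B.coord (Sum.inr i) (sg • B (Sum.inl m))
        = Mmat (fun j' : Fin n => θ.coeff (n - 1 - (j' : ℕ))) i m := by
      intro i m
      rw [hσa m, map_add, hco1, zero_add, hcoS]
    have hcoaτ : ∀ i m : Fin n, B.coord (Sum.inr i) (tg • B (Sum.inl m))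
        = if m = i then (1 : k) else 0 := by
      intro i m
      rw [hτa m, map_add, hco1, zero_add, hco2]
    have hcoaστ : ∀ i m : Fin n, B.coord (Sum.inr i) ((sg * tg) • B (Sum.inl m))
        = Mmat (fun j' : Fin n => θ.coeff (n - 1 - (j' : ℕ))) i m
          + (if m = i then (1 : k) else 0) := by
      intro i m
      rw [hsta m, map_add, hcoaσ, hco2]
    have hπι : (piMap B).comp (iotaMap B) = 0 := by
      apply B.ext
      rintro (m | m)
      · rw [LinearMap.comp_apply, LinearMap.zero_apply]
        show (∑ i, ∑ x : K4, (B.coord (Sum.inr i) (x • B (Sum.inl m))) • x • B (Sum.inl i)) = 0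
        rw [Finset.sum_congr rfl fun i (_ : i ∈ Finset.univ) =>
          hsum4 (fun x => (B.coord (Sum.inr i) (x • B (Sum.inl m))) • x • B (Sum.inl i))]
        have hgen : ∀ (α β : k) (u w sa : V),
            α • sa + (β • (u + w) + (α + β) • (sa + w)) = β • u + (α • w + β • sa) := by
          intro α β u w sa
          have h1 : α • sa + (β • (u + w) + (α + β) • (sa + w))
              = (β • u + (α • w + β • sa)) + ((α • sa + α • sa) + (β • w + β • w)) := by
            simp only [smul_add, add_smul]
            abel
          rw [h1, hvv, hvv]
          simp
        have hterm : ∀ i : Fin n,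
            (B.coord (Sum.inr i) ((1 : K4) • B (Sum.inl m))) • (1 : K4) • B (Sum.inl i)
            + ((B.coord (Sum.inr i) (sg • B (Sum.inl m))) • sg • B (Sum.inl i)
            + ((B.coord (Sum.inr i) (tg • B (Sum.inl m))) • tg • B (Sum.inl i)
            + (B.coord (Sum.inr i) ((sg * tg) • B (Sum.inl m))) • (sg * tg) • B (Sum.inl i)))
            = (if m = i then (1 : k) else 0) • B (Sum.inl i)
              + (Mmat (fun j' : Fin n => θ.coeff (n - 1 - (j' : ℕ))) i m • B (Sum.inr i)
              + (if m = i then (1 : k) else 0) • (sg • B (Sum.inl i))) := by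
          intro i
          simp only [one_smul]
          rw [hco1, zero_smul, zero_add, hcoaσ, hcoaτ, hcoaστ, hτa i, hsta i]
          exact hgen (Mmat (fun j' : Fin n => θ.coeff (n - 1 - (j' : ℕ))) i m)
            (if m = i then (1 : k) else 0) (B (Sum.inl i)) (B (Sum.inr i)) (sg • B (Sum.inl i))
        rw [Finset.sum_congr rfl fun i _ => hterm i, Finset.sum_add_distrib,
          Finset.sum_add_distrib, hcolgen m (fun i => B (Sum.inl i)),
          hcolgen m (fun i => sg • B (Sum.inl i)), hσa m]
        have hre : ∀ u w : V, u + (w + (u + w)) = (u + u) + (w + w) := by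
          intro u w; abel
        rw [hre, hvv, hvv, add_zero]
      · rw [LinearMap.comp_apply, LinearMap.zero_apply]
        show (∑ i, ∑ x : K4, (B.coord (Sum.inr i) (x • B (Sum.inr m))) • x • B (Sum.inl i)) = 0
        have h1 : ∀ i : Fin n, (∑ x : K4, (B.coord (Sum.inr i) (x • B (Sum.inr m))) • x • B (Sum.inl i))
            = (if m = i then (1 : k) else 0) • (∑ x : K4, x • B (Sum.inl i)) := by
          intro i
          rw [Finset.smul_sum]
          refine Finset.sum_congr rfl fun x _ => ?_
          rw [hxb x m, hco2]
        rw [Finset.sum_congr rfl fun i _ => h1 i,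
          hcolgen m (fun i => ∑ x : K4, x • B (Sum.inl i)),
          hsum4 (fun x => x • B (Sum.inl m)), one_smul, hsta m, hτa m, hσa m]
        have hre : ∀ u w t : V, u + ((u + w) + ((u + t) + ((u + w) + t)))
            = (u + u) + ((u + u) + ((w + w) + (t + t))) := by
          intro u w t; abel
        rw [hre, hvv, hvv, hvv]
        simp
    have hinj : Function.Injective (iotaMap B) := by
      rw [← LinearMap.ker_eq_bot, LinearMap.ker_eq_bot']
      intro v hv
      have h1 : ∀ i, B.repr v (Sum.inr i) = 0 := by
        intro i
        have h2 : B.coord (Sum.inr i) ((1 : K4) • v) = 0 := congrFun (congrFun hv i) 1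
        rwa [one_smul, Module.Basis.coord_apply] at h2
      have h2 : ∀ i, B.coord (Sum.inr i) (tg • v) = 0 :=
        fun i => congrFun (congrFun hv i) tg
      have hrepr : v = (∑ mm, B.repr v (Sum.inl mm) • B (Sum.inl mm))
          + ∑ mm, B.repr v (Sum.inr mm) • B (Sum.inr mm) := by
        have h := B.sum_repr v
        rw [Fintype.sum_sum_type] at h
        exact h.symm
      have hv2 : tg • v = (∑ mm, B.repr v (Sum.inl mm) • (B (Sum.inl mm) + B (Sum.inr mm)))
          + ∑ mm, B.repr v (Sum.inr mm) • B (Sum.inr mm) := by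
        calc tg • v = tg • ((∑ mm, B.repr v (Sum.inl mm) • B (Sum.inl mm))
              + ∑ mm, B.repr v (Sum.inr mm) • B (Sum.inr mm)) := by rw [← hrepr]
          _ = (∑ mm, B.repr v (Sum.inl mm) • (tg • B (Sum.inl mm)))
              + ∑ mm, B.repr v (Sum.inr mm) • (tg • B (Sum.inr mm)) := by
            rw [smul_add, Finset.smul_sum, Finset.smul_sum]
            congr 1 <;> exact Finset.sum_congr rfl fun mm _ => smul_comm _ _ _
          _ = (∑ mm, B.repr v (Sum.inl mm) • (B (Sum.inl mm) + B (Sum.inr mm)))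
              + ∑ mm, B.repr v (Sum.inr mm) • B (Sum.inr mm) := by
            congr 1
            · exact Finset.sum_congr rfl fun mm _ => by rw [hτa mm]
            · exact Finset.sum_congr rfl fun mm _ => by rw [hτb mm]
      have h3 : ∀ i, B.repr v (Sum.inl i) = 0 := by
        intro i
        have h4 := h2 i
        rw [hv2] at h4
        have h5 : B.coord (Sum.inr i)
            (∑ mm, B.repr v (Sum.inl mm) • (B (Sum.inl mm) + B (Sum.inr mm)))
            = B.repr v (Sum.inl i) := by
          rw [map_sum]
          have h6 : ∀ mm : Fin n, B.coord (Sum.inr i)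
              (B.repr v (Sum.inl mm) • (B (Sum.inl mm) + B (Sum.inr mm)))
              = if mm = i then B.repr v (Sum.inl mm) else 0 := by
            intro mm
            rw [map_smul, map_add, hco1, hco2, zero_add, smul_eq_mul, mul_ite, mul_one, mul_zero]
          rw [Finset.sum_congr rfl fun mm _ => h6 mm,
            Finset.sum_ite_eq' Finset.univ i (fun mm => B.repr v (Sum.inl mm)),
            if_pos (Finset.mem_univ i)]
        rw [map_add, h5, hcoS, h1 i, add_zero] at h4
        exact h4
      rw [← B.sum_repr v]
      apply Finset.sum_eq_zero
      rintro (i | i) _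
      · rw [h3 i, zero_smul]
      · rw [h1 i, zero_smul]
    have hequiv : ∀ (g : K4) (v : V), iotaMap B (g • v) = fun i x => iotaMap B v i (g⁻¹ * x) := by
      intro g v
      funext i x
      show B.coord (Sum.inr i) (x • g • v) = B.coord (Sum.inr i) ((g⁻¹ * x) • v)
      rw [← mul_smul, K4_inv', mul_comm]
    refine ⟨iotaMap B, hinj, hequiv, ?_⟩
    have hle : LinearMap.range (iotaMap B) ≤ LinearMap.ker (piMap B) := by
      rintro _ ⟨v, rfl⟩
      simpa using LinearMap.congr_fun hπι v
    have hfr1 : Module.finrank k V = n + n := by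
      rw [Module.finrank_eq_card_basis B]
      simp
    have hfr2 : Module.finrank k (Fin n → K4 → k) = n * 4 := by
      rw [Module.finrank_pi_fintype]
      have h4 : Module.finrank k (K4 → k) = 4 := by
        rw [Module.finrank_fintype_fun_eq_card]
        rfl
      simp [h4, Finset.sum_const]
    have hker : Module.finrank k (LinearMap.ker (piMap B)) = n + n := by
      have h := LinearMap.finrank_range_add_finrank_ker (piMap B)
      rw [LinearMap.range_eq_top.mpr hsurj, finrank_top, hfr1, hfr2] at h
      omega
    have hrg : Module.finrank k (LinearMap.range (iotaMap B)) = n + n := by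
      rw [LinearMap.finrank_range_of_inj hinj, hfr1]
    exact Submodule.eq_of_le_of_finrank_eq hle (by rw [hrg, hker])
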